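/- Let Γ and Δ be finitely generated groups, let G be a profinite group (a compact, Hausdorff, totally disconnected topological group), and let ι_Γ : Γ →* G and ι_Δ : Δ →* G be group homomorphisms with dense range such that: for every finite group Q and every group homomorphism f : Γ →* Q there is a continuous group homomorphism f̂ : G →* Q with f̂ ∘ ι_Γ = f, and likewise for every group homomorphism from Δ to a finite group. Then for every prime p there is a bijection e between the set of group homomorphisms Γ →* SL(2, F̄_p) and the set of group homomorphisms Δ →* SL(2, F̄_p), where F̄_p = AlgebraicClosure (ZMod p); moreover this bijection can be chosen so that for every ρ : Γ →* SL(2, F̄_p), the range of e(ρ) in SL(2, F̄_p) equals the range of ρ. -/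

import Mathlib

/-- Every homomorphism from a finitely generated group to `SL(2, F̄_p)` has finite range,
since the entries of the generators lie in a finite subfield. -/
theorem aux_sl2_finite_range {Γ : Type*} [Group Γ] [Group.FG Γ] {p : ℕ} [Fact p.Prime]
    (ρ : Γ →* Matrix.SpecialLinearGroup (Fin 2) (AlgebraicClosure (ZMod p))) :
    Finite ρ.range := by
  obtain ⟨S, hSgen, hSfin⟩ := Group.fg_iff.mp ‹Group.FG Γ›
  set F := AlgebraicClosure (ZMod p)
  -- the set of all matrix entries of the generators
  set T : Set F := ⋃ s ∈ S, Set.range (fun ij : Fin 2 × Fin 2 => (ρ s).1 ij.1 ij.2) with hT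
  have hTfin : T.Finite := hSfin.biUnion fun s _ => Set.finite_range _
  haveI := hTfin.to_subtype
  set K : IntermediateField (ZMod p) F := IntermediateField.adjoin (ZMod p) T with hK
  haveI : FiniteDimensional (ZMod p) K :=
    IntermediateField.finiteDimensional_adjoin fun x _ =>
      (Algebra.IsAlgebraic.isAlgebraic (R := ZMod p) x).isIntegral
  haveI : Finite K := Module.finite_of_finite (ZMod p)
  -- the subgroup of SL2 with entries in K
  let H : Subgroup (Matrix.SpecialLinearGroup (Fin 2) F) :=
    { carrier := {g | ∀ i j, g.1 i j ∈ K}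
      one_mem' := by
        intro i j
        simp only [Matrix.SpecialLinearGroup.coe_one, Matrix.one_apply]
        split_ifs
        · exact one_mem K
        · exact zero_mem K
      mul_mem' := by
        intro a b ha hb i j
        rw [Matrix.SpecialLinearGroup.coe_mul, Matrix.mul_apply]
        exact Subfield.sum_mem _ fun k _ => mul_mem (ha i k) (hb k j)
      inv_mem' := by
        intro a ha i j
        rw [Matrix.SpecialLinearGroup.coe_inv, Matrix.adjugate_fin_two]
        fin_cases i <;> fin_cases j
        · exact ha 1 1
        · exact neg_mem (ha 0 1)
        · exact neg_mem (ha 1 0)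
        · exact ha 0 0 }
  have hle : ρ.range ≤ H := by
    rw [MonoidHom.range_eq_map, ← hSgen, MonoidHom.map_closure]
    refine Subgroup.closure_le _ |>.2 ?_
    rintro x ⟨s, hs, rfl⟩ i j
    exact IntermediateField.subset_adjoin _ _ (Set.mem_biUnion hs ⟨(i, j), rfl⟩)
  haveI : Finite H := by
    refine Finite.of_injective
      (fun g : H => (fun i j => (⟨g.1.1 i j, g.2 i j⟩ : K) : Fin 2 → Fin 2 → K)) ?_
    intro a b hab
    refine Subtype.ext (Matrix.SpecialLinearGroup.ext _ _ fun i j => ?_)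
    have := congrFun (congrFun hab i) j
    exact congrArg Subtype.val this
  exact Finite.of_injective (Subgroup.inclusion hle) (Subgroup.inclusion_injective hle)

/-- A continuous map to a discrete space, precomposed with a dense-range map,
has the same range. -/
theorem aux_range_comp {G L α : Type*} [TopologicalSpace G] [TopologicalSpace L]
    [DiscreteTopology L] (F : G → L) (hF : Continuous F) (f : α → G) (hf : DenseRange f) :
    Set.range (F ∘ f) = Set.range F := by
  refine subset_antisymm (Set.range_comp_subset_range f F) ?_
  rintro _ ⟨g, rfl⟩
  have h1 : F g ∈ F '' closure (Set.range f) := ⟨g, by rw [hf.closure_range]; trivial, rfl⟩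
  have h3 := image_closure_subset_closure_image hF h1
  rw [IsClosed.closure_eq (isClosed_discrete _)] at h3
  rwa [← Set.range_comp] at h3

/-- Lemma 3.1 (replemma): if the finitely generated groups `Γ` and `Δ` have a common
profinite completion `G`, then for every prime `p` there is a bijection between
`Hom(Γ, SL(2, F̄_p))` and `Hom(Δ, SL(2, F̄_p))` matching up the images. -/
theorem sl2_representation_bijection_of_common_profinite_completion
    {Γ Δ G : Type*} [Group Γ] [Group Δ] [Group.FG Γ] [Group.FG Δ]
    [Group G] [TopologicalSpace G] [IsTopologicalGroup G]
    [CompactSpace G] [T2Space G] [TotallyDisconnectedSpace G]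
    (ιΓ : Γ →* G) (ιΔ : Δ →* G)
    (hΓdense : DenseRange ιΓ) (hΔdense : DenseRange ιΔ)
    (hΓ : ∀ (Q : Type) [Group Q] [Finite Q] [TopologicalSpace Q] [DiscreteTopology Q]
      (f : Γ →* Q), ∃ fhat : G →* Q, Continuous fhat ∧ fhat.comp ιΓ = f)
    (hΔ : ∀ (Q : Type) [Group Q] [Finite Q] [TopologicalSpace Q] [DiscreteTopology Q]
      (f : Δ →* Q), ∃ fhat : G →* Q, Continuous fhat ∧ fhat.comp ιΔ = f)
    (p : ℕ) [Fact p.Prime] :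
    ∃ e : (Γ →* Matrix.SpecialLinearGroup (Fin 2) (AlgebraicClosure (ZMod p))) ≃
        (Δ →* Matrix.SpecialLinearGroup (Fin 2) (AlgebraicClosure (ZMod p))),
      ∀ ρ, (e ρ).range = ρ.range := by
  set L := Matrix.SpecialLinearGroup (Fin 2) (AlgebraicClosure (ZMod p)) with hLdef
  -- put the discrete topology on L
  letI : TopologicalSpace L := ⊥
  haveI : DiscreteTopology L := ⟨rfl⟩
  -- every representation of Γ or Δ extends continuously over G
  have extΓ : ∀ ρ : Γ →* L, ∃ F : G →* L, Continuous F ∧ F.comp ιΓ = ρ := by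
    intro ρ
    haveI : Finite ρ.range := aux_sl2_finite_range ρ
    letI : TopologicalSpace ρ.range := ⊥
    haveI : DiscreteTopology ρ.range := ⟨rfl⟩
    obtain ⟨fhat, hc, hcomp⟩ := hΓ ρ.range ρ.rangeRestrict
    refine ⟨ρ.range.subtype.comp fhat, ?_, ?_⟩
    · rw [MonoidHom.coe_comp]
      exact Continuous.comp continuous_of_discreteTopology hc
    · rw [MonoidHom.comp_assoc, hcomp, MonoidHom.subtype_comp_rangeRestrict]
  have extΔ : ∀ σ : Δ →* L, ∃ F : G →* L, Continuous F ∧ F.comp ιΔ = σ := by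
    intro σ
    haveI : Finite σ.range := aux_sl2_finite_range σ
    letI : TopologicalSpace σ.range := ⊥
    haveI : DiscreteTopology σ.range := ⟨rfl⟩
    obtain ⟨fhat, hc, hcomp⟩ := hΔ σ.range σ.rangeRestrict
    refine ⟨σ.range.subtype.comp fhat, ?_, ?_⟩
    · rw [MonoidHom.coe_comp]
      exact Continuous.comp continuous_of_discreteTopology hc
    · rw [MonoidHom.comp_assoc, hcomp, MonoidHom.subtype_comp_rangeRestrict]
  -- uniqueness of continuous extensions along a dense map
  have uΓ : ∀ F F' : G →* L, Continuous F → Continuous F' →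
      F.comp ιΓ = F'.comp ιΓ → F = F' := by
    intro F F' hF hF' h
    refine DFunLike.coe_injective (hF.ext_on hΓdense hF' ?_)
    rintro x ⟨γ, rfl⟩
    exact DFunLike.congr_fun h γ
  have uΔ : ∀ F F' : G →* L, Continuous F → Continuous F' →
      F.comp ιΔ = F'.comp ιΔ → F = F' := by
    intro F F' hF hF' h
    refine DFunLike.coe_injective (hF.ext_on hΔdense hF' ?_)
    rintro x ⟨δ, rfl⟩
    exact DFunLike.congr_fun h δ
  choose FΓ hFΓc hFΓ using extΓ
  choose FΔ hFΔc hFΔ using extΔ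
  refine ⟨⟨fun ρ => (FΓ ρ).comp ιΔ, fun σ => (FΔ σ).comp ιΓ, ?_, ?_⟩, ?_⟩
  · intro ρ
    have : FΔ ((FΓ ρ).comp ιΔ) = FΓ ρ :=
      uΔ _ _ (hFΔc _) (hFΓc ρ) (hFΔ ((FΓ ρ).comp ιΔ))
    simp only [this, hFΓ ρ]
  · intro σ
    have : FΓ ((FΔ σ).comp ιΓ) = FΔ σ :=
      uΓ _ _ (hFΓc _) (hFΔc σ) (hFΓ ((FΔ σ).comp ιΓ))
    simp only [this, hFΔ σ]
  · intro ρ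
    refine SetLike.ext' ?_
    show Set.range ⇑((FΓ ρ).comp ιΔ) = Set.range ⇑ρ
    rw [MonoidHom.coe_comp, aux_range_comp _ (hFΓc ρ) _ hΔdense]
    rw [← aux_range_comp _ (hFΓc ρ) _ hΓdense, ← MonoidHom.coe_comp, hFΓ ρ]
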